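/- Let the content be (2,...,2 (r times), 1,...,1 (2s times), 2,...,2 (r times)) on k = 2r + 2s values. Then every normal c-array S of this content decomposes uniquely as S = S' * S̄, where S̄ has columns (k−r+j, r+1−j) each repeated twice for j = 1,...,r, and S' is a normal c-array whose entries form the set {r+1, ..., r+2s} with each value occurring exactly once. Consequently the number of normal c-arrays of this content equals the number of multilinear normal c-arrays on 2s values. -/

import Mathlib

/-- Tableaux are represented as lists of rows of positive integers.
`IsSSYT T` : rows weakly increasing, columns strictly increasing,
row lengths weakly decreasing, no empty rows (English notation). -/
def IsSSYT (T : List (List ℕ)) : Prop :=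
  (∀ r ∈ T, List.Pairwise (· ≤ ·) r) ∧
  (∀ (i j a b : ℕ), (T.getD i [])[j]? = some a → (T.getD (i+1) [])[j]? = some b → a < b) ∧
  (∀ i, (T.getD (i+1) []).length ≤ (T.getD i []).length) ∧
  [] ∉ T

/-- Schensted row insertion.  Returns the new tableau together with the
(0-based) index of the row in which a new box was added. -/
def rinsert : List (List ℕ) → ℕ → List (List ℕ) × ℕ
  | [], x => ([[x]], 0)
  | r :: rs, x =>
    match r.findIdx? (fun t => x < t) with
    | none => ((r ++ [x]) :: rs, 0)
    | some j =>
      let y := r.getD j 0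
      let p := rinsert rs y
      ((r.set j x) :: p.1, p.2 + 1)

/-- Reverse bumping through the rows above (given in reversed order). -/
def revBump : List (List ℕ) → ℕ → List (List ℕ) × ℕ
  | [], x => ([], x)
  | r :: rs, x =>
    let k := (r.takeWhile (· < x)).length
    if k = 0 then (r :: rs, x)
    else
      let y := r.getD (k - 1) 0
      let p := revBump rs y
      ((r.set (k - 1) x) :: p.1, p.2)

/-- Schensted deletion: remove the last box of row `i` and reverse-bump,
returning the new tableau and the ejected entry. -/
def schDelete (T : List (List ℕ)) (i : ℕ) : List (List ℕ) × ℕ :=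
  let r := T.getD i []
  let x := r.getLastD 0
  let r' := r.dropLast
  let p := revBump (T.take i).reverse x
  (p.1.reverse ++ (if r' = [] then ([] : List (List ℕ)) else [r']) ++ T.drop (i + 1), p.2)

/-- One step of `Carray2Dtableau`: insert `b` and append `a` at the end of
the next row. -/
def c2dStep (T : List (List ℕ)) (p : ℕ × ℕ) : List (List ℕ) :=
  let q := rinsert T p.2
  if q.2 + 1 < q.1.length then q.1.set (q.2 + 1) ((q.1.getD (q.2 + 1) []) ++ [p.1])
  else q.1 ++ [[p.1]]

/-- The map `Carray2Dtableau` from c-arrays (lists of columns `(aᵢ, bᵢ)`) to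
tableaux of double shape. -/
def c2d (S : List (ℕ × ℕ)) : List (List ℕ) := S.foldl c2dStep []

/-- One step of `Dtableau2Carray`: extract the maximal entry `x` (occurrence of
maximal column, at the end of row `i`), apply `schDelete` at row `i` ejecting `y`,
and remove the corresponding entry of row `i-1`. -/
def d2cStep (T : List (List ℕ)) : List (List ℕ) × (ℕ × ℕ) :=
  let x := T.flatten.foldr max 0
  let cand := (List.range T.length).filter (fun i => (T.getD i []).getLastD 0 = x)
  let i := cand.foldl (fun acc i =>
      if (T.getD acc []).length < (T.getD i []).length then i else acc) 0
  let j := (T.getD i []).length - 1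
  let p := schDelete T i
  let T2 := p.1.set (i - 1) ((p.1.getD (i - 1) []).eraseIdx j)
  (T2.filter (fun r => r ≠ []), (x, p.2))

def d2cAux : ℕ → List (List ℕ) → List (ℕ × ℕ)
  | 0, _ => []
  | n + 1, T =>
    if T = [] then []
    else
      let p := d2cStep T
      d2cAux n p.1 ++ [p.2]

/-- The map `Dtableau2Carray`. -/
def d2c (T : List (List ℕ)) : List (ℕ × ℕ) := d2cAux T.flatten.length T

/-- Content of a two-rowed array: multiplicity of each value among all entries. -/
def cntA (S : List (ℕ × ℕ)) (v : ℕ) : ℕ := (S.map Prod.fst ++ S.map Prod.snd).count v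

/-- Content of a tableau. -/
def cntT (T : List (List ℕ)) (v : ℕ) : ℕ := T.flatten.count v

/-- A c-array: each column `(aᵢ, bᵢ)` satisfies `bᵢ < aᵢ` and the columns are
weakly increasing in the lexicographic order. -/
def IsCArray (S : List (ℕ × ℕ)) : Prop :=
  (∀ p ∈ S, p.2 < p.1) ∧
  List.Chain' (fun p q : ℕ × ℕ => p.1 < q.1 ∨ (p.1 = q.1 ∧ p.2 ≤ q.2)) S

/-- Normality: every value occurs at most twice, and the bottom row contains no
weakly increasing subsequence of length 3. -/
def IsNormal (S : List (ℕ × ℕ)) : Prop :=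
  (∀ v, cntA S v ≤ 2) ∧
  ∀ t : List ℕ, t.Sublist (S.map Prod.snd) → t.Pairwise (· ≤ ·) → t.length ≤ 2

/-- A double shape: each row length is repeated an even number of times. -/
def IsDoubleShape (T : List (List ℕ)) : Prop :=
  ∃ L : List ℕ, T.map List.length = L.flatMap (fun a => [a, a])

/-- The array `S̄` with columns `(k-r+j, r+1-j)`, `j = 1, …, r`, each repeated twice. -/
def sbarArr (r k : ℕ) : List (ℕ × ℕ) :=
  (List.range r).flatMap (fun j => [(k - r + 1 + j, r - j), (k - r + 1 + j, r - j)])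

/-- Content `(2,…,2 (r times), 1,…,1 (2s times), 2,…,2 (r times))` on `k` values. -/
def contentRSR (r s k v : ℕ) : ℕ :=
  if v = 0 then 0
  else if v ≤ r then 2
  else if v ≤ r + 2 * s then 1
  else if v ≤ k then 2 else 0

-- ===== auxiliary development =====

abbrev lexR (p q : ℕ × ℕ) : Prop := p.1 < q.1 ∨ (p.1 = q.1 ∧ p.2 ≤ q.2)

instance : IsTrans (ℕ × ℕ) lexR := ⟨by intro a b c h1 h2; unfold lexR at *; omega⟩

def tailArr (r s m : ℕ) : List (ℕ × ℕ) :=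
  (List.range m).flatMap (fun j => [(r + 2*s + 1 + j, r - j), (r + 2*s + 1 + j, r - j)])

lemma sbar_eq_tail (r s k : ℕ) (hk : k = 2 * r + 2 * s) : sbarArr r k = tailArr r s r := by
  subst hk
  unfold sbarArr tailArr
  congr 1; funext j
  have h : 2*r+2*s - r + 1 + j = r+2*s+1+j := by omega
  rw [h]

lemma tail_succ (r s m : ℕ) :
    tailArr r s (m+1) = tailArr r s m ++ [(r + 2*s + 1 + m, r - m), (r + 2*s + 1 + m, r - m)] := by
  unfold tailArr
  rw [List.range_succ, List.flatMap_append]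
  simp

lemma tail_length (r s m : ℕ) : (tailArr r s m).length = 2 * m := by
  induction m with
  | zero => rfl
  | succ m ih => rw [tail_succ]; simp [ih]; omega

lemma mem_tail {r s m : ℕ} {x : ℕ × ℕ} (h : x ∈ tailArr r s m) :
    ∃ j < m, x = (r + 2*s + 1 + j, r - j) := by
  unfold tailArr at h
  simp only [List.mem_flatMap, List.mem_range, List.mem_cons, List.not_mem_nil] at h
  obtain ⟨j, hj, h⟩ := h
  exact ⟨j, hj, by tauto⟩

lemma tail_pairwise (r s m : ℕ) : List.Pairwise lexR (tailArr r s m) := by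
  induction m with
  | zero => exact List.Pairwise.nil
  | succ m ih =>
    rw [tail_succ, List.pairwise_append]
    refine ⟨ih, ?_, ?_⟩
    · refine List.pairwise_cons.mpr ⟨?_, List.pairwise_singleton _ _⟩
      intro b hb
      simp only [List.mem_singleton] at hb
      subst hb; exact Or.inr ⟨rfl, le_rfl⟩
    · intro a ha b hb
      obtain ⟨j, hj, rfl⟩ := mem_tail ha
      simp only [List.mem_cons, List.not_mem_nil, or_false] at hb
      have : b.1 = r + 2*s + 1 + m := by rcases hb with rfl | rfl <;> rfl
      left; omega

def cnt (r s m v : ℕ) : ℕ :=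
  if v = 0 then 0
  else if v ≤ r - m then 0
  else if v ≤ r then 2
  else if v ≤ r + 2*s then 1
  else if v ≤ r + 2*s + m then 2 else 0

lemma cntA_mem {S : List (ℕ × ℕ)} {x : ℕ}
    (h : x ∈ S.map Prod.fst ++ S.map Prod.snd) : 1 ≤ cntA S x :=
  List.count_pos_iff.mpr h

lemma cntA_append (A B : List (ℕ × ℕ)) (v : ℕ) :
    cntA (A ++ B) v = cntA A v + cntA B v := by
  unfold cntA
  simp [List.count_append]
  omega

lemma carray_pairwise {S : List (ℕ × ℕ)} (h : IsCArray S) : List.Pairwise lexR S :=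
  List.isChain_iff_pairwise.mp h.2

lemma core (r s : ℕ) : ∀ m, m ≤ r → ∀ S : List (ℕ × ℕ),
    IsCArray S → IsNormal S → (∀ v, cntA S v = cnt r s m v) →
    ∃ S', IsCArray S' ∧ IsNormal S' ∧
      (∀ v, cntA S' v = if r + 1 ≤ v ∧ v ≤ r + 2*s then 1 else 0) ∧
      S = S' ++ tailArr r s m := by
  intro m
  induction m with
  | zero =>
    intro _ S hC hN hc
    refine ⟨S, hC, hN, ?_, by simp [tailArr]⟩
    intro v
    rw [hc v]
    unfold cnt
    split_ifs <;> first | omega | simp_all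
  | succ m ih =>
    intro hm S hC hN hc
    -- entry bounds
    have hent : ∀ x ∈ S.map Prod.fst ++ S.map Prod.snd, r - m ≤ x ∧ x ≤ r + 2*s + m + 1 := by
      intro x hx
      have h1 := cntA_mem hx
      rw [hc x] at h1
      unfold cnt at h1
      split_ifs at h1 <;> first | omega | simp_all
    -- count of the maximum M := r+2s+m+1
    have hMc : cntA S (r + 2*s + m + 1) = 2 := by
      rw [hc]
      unfold cnt
      split_ifs <;> first | omega | simp_all
    have hMsnd : List.count (r + 2*s + m + 1) (S.map Prod.snd) = 0 := by
      rw [List.count_eq_zero]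
      intro hmem
      obtain ⟨p, hp, hp2⟩ := List.mem_map.mp hmem
      have h1 : p.1 ∈ S.map Prod.fst ++ S.map Prod.snd :=
        List.mem_append_left _ (List.mem_map.mpr ⟨p, hp, rfl⟩)
      have := (hent _ h1).2
      have := hC.1 p hp
      omega
    have hMfst : List.count (r + 2*s + m + 1) (S.map Prod.fst) = 2 := by
      have := hMc
      unfold cntA at this
      rw [List.count_append] at this
      omega
    -- bottom value b0 := r - m counts
    have hb0c : cntA S (r - m) = 2 := by
      rw [hc]; unfold cnt; split_ifs <;> first | omega | simp_all
    have hb0fst : List.count (r - m) (S.map Prod.fst) = 0 := by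
      rw [List.count_eq_zero]
      intro hmem
      obtain ⟨p, hp, hp1⟩ := List.mem_map.mp hmem
      have h1 : p.2 ∈ S.map Prod.fst ++ S.map Prod.snd :=
        List.mem_append_right _ (List.mem_map.mpr ⟨p, hp, rfl⟩)
      have := (hent _ h1).1
      have := hC.1 p hp
      omega
    have hb0snd : List.count (r - m) (S.map Prod.snd) = 2 := by
      have := hb0c
      unfold cntA at this
      rw [List.count_append] at this
      omega
    -- length ≥ 2 and decomposition
    have hlen : 2 ≤ S.length := by
      have : List.count (r + 2*s + m + 1) (S.map Prod.fst) ≤ (S.map Prod.fst).length := List.count_le_length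
      rw [hMfst, List.length_map] at this
      exact this
    have hdec : ∃ S₀ p q, S = S₀ ++ [p, q] := by
      have h1 := List.take_append_drop (S.length - 2) S
      have h2 : (S.drop (S.length - 2)).length = 2 := by
        rw [List.length_drop]; omega
      obtain ⟨p, q, hpq⟩ := List.length_eq_two.mp h2
      exact ⟨S.take (S.length - 2), p, q, (h1.symm.trans (by rw [hpq]))⟩
    obtain ⟨S₀, p, q, rfl⟩ := hdec
    have hpw := carray_pairwise hC
    have hpwf : List.Pairwise (fun a b : ℕ × ℕ => a.1 ≤ b.1) S₀ ∨ True := Or.inr trivial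
    -- fst pairwise ≤
    have hple : List.Pairwise (fun a b : ℕ × ℕ => a.1 ≤ b.1) (S₀ ++ [p, q]) :=
      hpw.imp (by intro a b h; unfold lexR at h; omega)
    rw [List.pairwise_append] at hple
    have hcross := hple.2.2
    have hpq1 : p.1 ≤ q.1 := by
      have := hple.2.1
      rw [List.pairwise_cons] at this
      exact this.1 q (List.mem_singleton.mpr rfl)
    have hq1le : q.1 ≤ r + 2*s + m + 1 := by
      have : q.1 ∈ (S₀ ++ [p,q]).map Prod.fst ++ (S₀ ++ [p,q]).map Prod.snd := by
        refine List.mem_append_left _ (List.mem_map.mpr ⟨q, ?_, rfl⟩)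
        simp
      exact (hent _ this).2
    -- fst maps decomposition
    have hfmap : (S₀ ++ [p, q]).map Prod.fst = S₀.map Prod.fst ++ [p.1, q.1] := by simp
    have hsmap : (S₀ ++ [p, q]).map Prod.snd = S₀.map Prod.snd ++ [p.2, q.2] := by simp
    have hp1 : p.1 = r + 2*s + m + 1 := by
      by_contra hne
      have hplt : p.1 < r + 2*s + m + 1 := by
        have : p.1 ∈ (S₀ ++ [p,q]).map Prod.fst ++ (S₀ ++ [p,q]).map Prod.snd := by
          refine List.mem_append_left _ (List.mem_map.mpr ⟨p, ?_, rfl⟩)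
          simp
        have := (hent _ this).2
        omega
      have hc0 : List.count (r + 2*s + m + 1) (S₀.map Prod.fst) = 0 := by
        rw [List.count_eq_zero]
        intro hmem
        obtain ⟨a, ha, ha1⟩ := List.mem_map.mp hmem
        have := hcross a ha p (by simp)
        omega
      rw [hfmap, List.count_append, hc0] at hMfst
      simp only [List.count_cons, List.count_nil, beq_iff_eq] at hMfst
      split_ifs at hMfst <;> omega
    have hq1 : q.1 = r + 2*s + m + 1 := by omega
    -- snd: p.2 ≤ q.2 from lexR p q
    have hpq2 : p.2 ≤ q.2 := by
      have hlex : lexR p q := by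
        have := (List.pairwise_append.mp hpw).2.1
        rw [List.pairwise_cons] at this
        exact this.1 q (List.mem_singleton.mpr rfl)
      unfold lexR at hlex
      omega
    have hb0le : ∀ x ∈ (S₀ ++ [p,q]).map Prod.snd, r - m ≤ x := by
      intro x hx
      exact (hent _ (List.mem_append_right _ hx)).1
    have hp2 : p.2 = r - m ∧ q.2 = r - m := by
      have hbp : r - m ≤ p.2 := hb0le _ (by simp)
      have hbq : r - m ≤ q.2 := hb0le _ (by simp)
      have hc0 : List.count (r - m) (S₀.map Prod.snd) = 0 := by
        rw [List.count_eq_zero]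
        intro hmem
        have hsub : [r - m, p.2, q.2].Sublist ((S₀ ++ [p,q]).map Prod.snd) := by
          rw [hsmap]
          exact List.Sublist.append (List.singleton_sublist.mpr hmem) (List.Sublist.refl _)
        have hsort : List.Pairwise (· ≤ ·) [r - m, p.2, q.2] := by
          refine List.pairwise_cons.mpr ⟨?_, List.pairwise_cons.mpr ⟨?_, List.pairwise_singleton _ _⟩⟩
          · intro b hb; simp at hb; rcases hb with rfl | rfl <;> omega
          · intro b hb; simp at hb; subst hb; omega
        have := hN.2 _ hsub hsort
        simp at this
      rw [hsmap, List.count_append, hc0] at hb0snd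
      simp only [List.count_cons, List.count_nil, beq_iff_eq] at hb0snd
      split_ifs at hb0snd <;> omega
    -- S₀ properties
    have hsub0 : S₀.Sublist (S₀ ++ [p, q]) := List.sublist_append_left _ _
    have hC0 : IsCArray S₀ := by
      constructor
      · intro a ha; exact hC.1 a (List.mem_append_left _ ha)
      · exact (hpw.sublist hsub0).isChain
    have hN0 : IsNormal S₀ := by
      constructor
      · intro v
        refine le_trans ?_ (hN.1 v)
        unfold cntA
        exact List.Sublist.count_le v
          (List.Sublist.append (hsub0.map _)
            (hsub0.map _))
      · intro t ht hts
        exact hN.2 t (ht.trans (hsub0.map _)) hts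
    have hcnt0 : ∀ v, cntA S₀ v = cnt r s m v := by
      intro v
      have hpv : p = (r + 2*s + m + 1, r - m) := Prod.ext hp1 hp2.1
      have hqv : q = (r + 2*s + m + 1, r - m) := Prod.ext hq1 hp2.2
      have hv := hc v
      rw [cntA_append] at hv
      have hcpq : cntA [p, q] v =
          (if v = r + 2*s + m + 1 then 2 else 0) + (if v = r - m then 2 else 0) := by
        rw [hpv, hqv]
        unfold cntA
        simp only [List.map_cons, List.map_nil, List.count_append, List.count_cons,
          List.count_nil, beq_iff_eq]
        split_ifs <;> first | omega | simp_all
      rw [hcpq] at hv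
      unfold cnt at hv ⊢
      split_ifs at hv ⊢ <;> first | omega | simp_all
    obtain ⟨S', h1, h2, h3, h4⟩ := ih (by omega) S₀ hC0 hN0 hcnt0
    refine ⟨S', h1, h2, h3, ?_⟩
    rw [tail_succ, h4]
    have hpv : p = (r + 2*s + 1 + m, r - m) := Prod.ext (by omega) hp2.1
    have hqv : q = (r + 2*s + 1 + m, r - m) := Prod.ext (by omega) hp2.2
    rw [hpv, hqv, List.append_assoc]

lemma cnt_top (r s k v : ℕ) (hk : k = 2*r+2*s) : cnt r s r v = contentRSR r s k v := by
  unfold cnt contentRSR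
  split_ifs <;> first | omega | simp_all

-- shifts
def shiftUp (r : ℕ) (T : List (ℕ × ℕ)) : List (ℕ × ℕ) := T.map (fun p => (p.1 + r, p.2 + r))
def shiftDown (r : ℕ) (T : List (ℕ × ℕ)) : List (ℕ × ℕ) := T.map (fun p => (p.1 - r, p.2 - r))

lemma shiftUp_fst (r : ℕ) (T : List (ℕ × ℕ)) :
    (shiftUp r T).map Prod.fst = (T.map Prod.fst).map (· + r) := by
  simp [shiftUp]
lemma shiftUp_snd (r : ℕ) (T : List (ℕ × ℕ)) :
    (shiftUp r T).map Prod.snd = (T.map Prod.snd).map (· + r) := by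
  simp [shiftUp]
lemma shiftDown_fst (r : ℕ) (T : List (ℕ × ℕ)) :
    (shiftDown r T).map Prod.fst = (T.map Prod.fst).map (· - r) := by
  simp [shiftDown]
lemma shiftDown_snd (r : ℕ) (T : List (ℕ × ℕ)) :
    (shiftDown r T).map Prod.snd = (T.map Prod.snd).map (· - r) := by
  simp [shiftDown]

lemma count_map_add (r v : ℕ) (l : List ℕ) :
    List.count v (l.map (· + r)) = if r ≤ v then List.count (v - r) l else 0 := by
  induction l with
  | nil => simp
  | cons a l ih =>
    simp only [List.map_cons, List.count_cons, beq_iff_eq, ih]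
    split_ifs <;> omega

lemma count_map_sub (r v : ℕ) (l : List ℕ) (hl : ∀ x ∈ l, r + 1 ≤ x) :
    List.count v (l.map (· - r)) = if 1 ≤ v then List.count (v + r) l else 0 := by
  induction l with
  | nil => simp
  | cons a l ih =>
    have ha := hl a List.mem_cons_self
    have ih' := ih (fun x hx => hl x (List.mem_cons_of_mem a hx))
    simp only [List.map_cons, List.count_cons, beq_iff_eq, ih']
    split_ifs <;> omega

lemma cntA_shiftUp (r v : ℕ) (T : List (ℕ × ℕ)) :
    cntA (shiftUp r T) v = if r ≤ v then cntA T (v - r) else 0 := by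
  unfold cntA
  rw [List.count_append, List.count_append, shiftUp_fst, shiftUp_snd,
    count_map_add, count_map_add]
  split_ifs <;> omega

lemma cntA_shiftDown (r v : ℕ) (T : List (ℕ × ℕ))
    (h : ∀ x ∈ T.map Prod.fst ++ T.map Prod.snd, r + 1 ≤ x) :
    cntA (shiftDown r T) v = if 1 ≤ v then cntA T (v + r) else 0 := by
  unfold cntA
  rw [List.count_append, List.count_append, shiftDown_fst, shiftDown_snd,
    count_map_sub r v _ (fun x hx => h x (List.mem_append_left _ hx)),
    count_map_sub r v _ (fun x hx => h x (List.mem_append_right _ hx))]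
  split_ifs <;> omega

-- counts on the tail
lemma count_tail_snd (r s : ℕ) : ∀ m, m ≤ r → ∀ v,
    List.count v ((tailArr r s m).map Prod.snd) = if r - m + 1 ≤ v ∧ v ≤ r then 2 else 0 := by
  intro m
  induction m with
  | zero =>
    intro _ v
    simp only [tailArr, List.range_zero, List.flatMap_nil, List.map_nil, List.count_nil]
    split_ifs <;> first | omega | simp_all
  | succ m ih =>
    intro hm v
    rw [tail_succ]
    simp only [List.map_append, List.count_append, ih (by omega) v, List.map_cons,
      List.map_nil, List.count_cons, List.count_nil, beq_iff_eq]
    split_ifs <;> omega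

lemma count_tail_fst (r s : ℕ) : ∀ m, ∀ v,
    List.count v ((tailArr r s m).map Prod.fst) =
      if r + 2*s + 1 ≤ v ∧ v ≤ r + 2*s + m then 2 else 0 := by
  intro m
  induction m with
  | zero =>
    intro v
    simp only [tailArr, List.range_zero, List.flatMap_nil, List.map_nil, List.count_nil]
    split_ifs <;> first | omega | simp_all
  | succ m ih =>
    intro v
    rw [tail_succ]
    simp only [List.map_append, List.count_append, ih v, List.map_cons,
      List.map_nil, List.count_cons, List.count_nil, beq_iff_eq]
    split_ifs <;> omega

lemma cntA_tail (r s m : ℕ) (hm : m ≤ r) (v : ℕ) :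
    cntA (tailArr r s m) v =
      (if r - m + 1 ≤ v ∧ v ≤ r then 2 else 0) +
      (if r + 2*s + 1 ≤ v ∧ v ≤ r + 2*s + m then 2 else 0) := by
  unfold cntA
  rw [List.count_append, count_tail_fst r s m v, count_tail_snd r s m hm v]
  omega

lemma tail_snd_pairwise (r s m : ℕ) :
    List.Pairwise (· ≥ ·) ((tailArr r s m).map Prod.snd) := by
  induction m with
  | zero => simp [tailArr]
  | succ m ih =>
    rw [tail_succ]
    simp only [List.map_append]
    rw [List.pairwise_append]
    refine ⟨ih, by simp, ?_⟩
    intro a ha b hb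
    obtain ⟨x, hx, rfl⟩ := List.mem_map.mp ha
    obtain ⟨j, hj, rfl⟩ := mem_tail hx
    simp only [List.map_cons, List.map_nil, List.mem_cons, List.not_mem_nil, or_false] at hb
    have : b = r - m := by rcases hb with rfl | rfl <;> rfl
    simp only [this]
    omega

lemma setTwo_of (r s : ℕ) {S' : List (ℕ × ℕ)} (h1 : IsCArray S') (h2 : IsNormal S')
    (h3 : ∀ v, cntA S' v = if r + 1 ≤ v ∧ v ≤ r + 2*s then 1 else 0) :
    IsCArray (shiftDown r S') ∧ IsNormal (shiftDown r S') ∧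
      (∀ v, cntA (shiftDown r S') v = if 1 ≤ v ∧ v ≤ 2*s then 1 else 0) := by
  have hent : ∀ x ∈ S'.map Prod.fst ++ S'.map Prod.snd, r + 1 ≤ x ∧ x ≤ r + 2*s := by
    intro x hx
    have := cntA_mem hx
    rw [h3 x] at this
    split_ifs at this <;> omega
  have hmem : ∀ p ∈ S', (r + 1 ≤ p.1 ∧ p.1 ≤ r + 2*s) ∧ (r + 1 ≤ p.2 ∧ p.2 ≤ r + 2*s) := by
    intro p hp
    exact ⟨hent p.1 (List.mem_append_left _ (List.mem_map.mpr ⟨p, hp, rfl⟩)),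
           hent p.2 (List.mem_append_right _ (List.mem_map.mpr ⟨p, hp, rfl⟩))⟩
  have hcontent : ∀ v, cntA (shiftDown r S') v = if 1 ≤ v ∧ v ≤ 2*s then 1 else 0 := by
    intro v
    rw [cntA_shiftDown r v S' (fun x hx => (hent x hx).1), h3 (v + r)]
    split_ifs <;> omega
  refine ⟨⟨?_, ?_⟩, ⟨?_, ?_⟩, hcontent⟩
  · intro p hp
    obtain ⟨q, hq, rfl⟩ := List.mem_map.mp hp
    have := hmem q hq
    have := h1.1 q hq
    dsimp only
    omega
  · refine List.Pairwise.isChain (List.pairwise_map.mpr ?_)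
    refine List.Pairwise.imp_of_mem ?_ (carray_pairwise h1)
    intro a b ha hb hab
    have h1 := hmem a ha
    have h2 := hmem b hb
    unfold lexR at hab
    dsimp only
    omega
  · intro v
    rw [hcontent v]
    split_ifs <;> omega
  · intro t ht hts
    rw [shiftDown_snd] at ht
    obtain ⟨t₀, ht₀, rfl⟩ := List.sublist_map_iff.mp ht
    rw [List.length_map]
    refine h2.2 t₀ ht₀ ?_
    have hb : ∀ x ∈ t₀, r + 1 ≤ x := fun x hx =>
      (hent x (List.mem_append_right _ (ht₀.subset hx))).1
    refine List.Pairwise.imp_of_mem ?_ (List.pairwise_map.mp hts)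
    intro a b ha hb'
    have := hb a ha
    have := hb b hb'
    omega

lemma setOne_of (r s k : ℕ) (hk : k = 2 * r + 2 * s) {T : List (ℕ × ℕ)}
    (h1 : IsCArray T) (h2 : IsNormal T)
    (h3 : ∀ v, cntA T v = if 1 ≤ v ∧ v ≤ 2*s then 1 else 0) :
    IsCArray (shiftUp r T ++ sbarArr r k) ∧ IsNormal (shiftUp r T ++ sbarArr r k) ∧
      (∀ v, cntA (shiftUp r T ++ sbarArr r k) v = contentRSR r s k v) := by
  rw [sbar_eq_tail r s k hk]
  have hent : ∀ x ∈ T.map Prod.fst ++ T.map Prod.snd, 1 ≤ x ∧ x ≤ 2*s := by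
    intro x hx
    have := cntA_mem hx
    rw [h3 x] at this
    split_ifs at this <;> omega
  have hmem : ∀ p ∈ T, (1 ≤ p.1 ∧ p.1 ≤ 2*s) ∧ (1 ≤ p.2 ∧ p.2 ≤ 2*s) := by
    intro p hp
    exact ⟨hent p.1 (List.mem_append_left _ (List.mem_map.mpr ⟨p, hp, rfl⟩)),
           hent p.2 (List.mem_append_right _ (List.mem_map.mpr ⟨p, hp, rfl⟩))⟩
  have hcontent : ∀ v, cntA (shiftUp r T ++ tailArr r s r) v = contentRSR r s k v := by
    intro v
    rw [cntA_append, cntA_shiftUp, cntA_tail r s r le_rfl v, h3 (v - r)]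
    unfold contentRSR
    subst hk
    split_ifs <;> omega
  refine ⟨⟨?_, ?_⟩, ⟨?_, ?_⟩, hcontent⟩
  · intro p hp
    rcases List.mem_append.mp hp with h | h
    · obtain ⟨q, hq, rfl⟩ := List.mem_map.mp h
      have := h1.1 q hq
      dsimp only
      omega
    · obtain ⟨j, hj, rfl⟩ := mem_tail h
      dsimp only
      omega
  · refine List.Pairwise.isChain ?_
    rw [List.pairwise_append]
    refine ⟨List.pairwise_map.mpr ?_, tail_pairwise r s r, ?_⟩
    · refine (carray_pairwise h1).imp ?_
      intro a b hab
      unfold lexR at hab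
      dsimp only
      omega
    · intro a ha b hb
      obtain ⟨q, hq, rfl⟩ := List.mem_map.mp ha
      obtain ⟨j, hj, rfl⟩ := mem_tail hb
      have := hmem q hq
      left
      dsimp only
      omega
  · intro v
    rw [hcontent v]
    unfold contentRSR
    split_ifs <;> omega
  · intro t ht hts
    rw [List.map_append, shiftUp_snd] at ht
    obtain ⟨t₁, t₂, rfl, hs1, hs2⟩ := List.sublist_append_iff.mp ht
    rcases t₁ with _ | ⟨a, t₁⟩
    · -- t = t₂, sublist of the tail bottoms
      simp only [List.nil_append] at hts ⊢
      by_contra hlen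
      push_neg at hlen
      have htk : (t₂.take 3).length = 3 := by
        rw [List.length_take]; omega
      obtain ⟨x, y, z, hxyz⟩ := List.length_eq_three.mp htk
      have hsub3 : [x, y, z].Sublist ((tailArr r s r).map Prod.snd) := by
        rw [← hxyz]
        exact (List.take_sublist 3 t₂).trans hs2
      have hsort3 : List.Pairwise (· ≤ ·) [x, y, z] := by
        rw [← hxyz]
        exact hts.sublist (List.take_sublist 3 t₂)
      have hanti3 : List.Pairwise (· ≥ ·) [x, y, z] :=
        (tail_snd_pairwise r s r).sublist hsub3
      have hxy : x = y ∧ y = z := by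
        have a1 := (List.pairwise_cons.mp hanti3).1 y (by simp)
        have a2 := (List.pairwise_cons.mp (List.pairwise_cons.mp hanti3).2).1 z (by simp)
        have b1 := (List.pairwise_cons.mp hsort3).1 y (by simp)
        have b2 := (List.pairwise_cons.mp (List.pairwise_cons.mp hsort3).2).1 z (by simp)
        exact ⟨by omega, by omega⟩
      obtain ⟨rfl, rfl⟩ := hxy
      have hcount : List.count x ((tailArr r s r).map Prod.snd) ≤ 2 := by
        rw [count_tail_snd r s r le_rfl x]
        split_ifs <;> omega
      have : List.count x [x, x, x] ≤ List.count x ((tailArr r s r).map Prod.snd) :=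
        hsub3.count_le x
      simp [List.count_cons] at this
      omega
    · rcases t₂ with _ | ⟨b, t₂⟩
      · -- t = t₁, sublist of shifted bottoms
        simp only [List.append_nil] at hts ⊢
        obtain ⟨t₀, ht₀, heq⟩ := List.sublist_map_iff.mp hs1
        rw [heq, List.length_map]
        refine h2.2 t₀ ht₀ ?_
        rw [heq] at hts
        refine List.Pairwise.imp ?_ (List.pairwise_map.mp hts)
        intro u w huw
        omega
      · -- both nonempty: impossible
        exfalso
        have hcross := (List.pairwise_append.mp hts).2.2
        have hab : a ≤ b := hcross a (by simp) b (by simp)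
        have ha : a ∈ (T.map Prod.snd).map (· + r) := hs1.subset (by simp)
        obtain ⟨x, hx, rfl⟩ := List.mem_map.mp ha
        have hx1 : 1 ≤ x := (hent x (List.mem_append_right _ hx)).1
        have hb : b ∈ (tailArr r s r).map Prod.snd := hs2.subset (by simp)
        obtain ⟨q, hq, rfl⟩ := List.mem_map.mp hb
        obtain ⟨j, hj, rfl⟩ := mem_tail hq
        dsimp only at hab
        omega

/-- every normal c-array of content
`(2^r, 1^{2s}, 2^r)` decomposes uniquely as `S = S' * S̄` with `S'` a multilinear
normal c-array on the values `{r+1, …, r+2s}`; consequently the number of normal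
c-arrays of this content equals the number of multilinear normal c-arrays on `2s` values. -/
theorem normal_carray_decomposition (r s : ℕ) (k : ℕ) (hk : k = 2 * r + 2 * s) :
    (∀ S : List (ℕ × ℕ),
      IsCArray S ∧ IsNormal S ∧ (∀ v, cntA S v = contentRSR r s k v) →
      ∃! S' : List (ℕ × ℕ),
        (IsCArray S' ∧ IsNormal S' ∧
          (∀ v, cntA S' v = if r + 1 ≤ v ∧ v ≤ r + 2 * s then 1 else 0)) ∧
        S = S' ++ sbarArr r k) ∧
    Nat.card {S : List (ℕ × ℕ) // IsCArray S ∧ IsNormal S ∧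
        (∀ v, cntA S v = contentRSR r s k v)} =
    Nat.card {S : List (ℕ × ℕ) // IsCArray S ∧ IsNormal S ∧
        (∀ v, cntA S v = if 1 ≤ v ∧ v ≤ 2 * s then 1 else 0)} := by
  constructor
  · rintro S ⟨hC, hN, hc⟩
    obtain ⟨S', h1, h2, h3, h4⟩ := core r s r le_rfl S hC hN
      (fun v => (hc v).trans (cnt_top r s k v hk).symm)
    rw [← sbar_eq_tail r s k hk] at h4
    refine ⟨S', ⟨⟨h1, h2, h3⟩, h4⟩, ?_⟩
    rintro T ⟨-, hT⟩
    exact List.append_inj_left' (hT.symm.trans h4) rfl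
  · have hto : ∀ S : {S : List (ℕ × ℕ) // IsCArray S ∧ IsNormal S ∧
        (∀ v, cntA S v = contentRSR r s k v)},
        IsCArray (shiftDown r (S.1.take (S.1.length - 2*r))) ∧
        IsNormal (shiftDown r (S.1.take (S.1.length - 2*r))) ∧
        (∀ v, cntA (shiftDown r (S.1.take (S.1.length - 2*r))) v =
          if 1 ≤ v ∧ v ≤ 2 * s then 1 else 0) := by
      rintro ⟨S, hC, hN, hc⟩
      obtain ⟨S', h1, h2, h3, h4⟩ := core r s r le_rfl S hC hN
        (fun v => (hc v).trans (cnt_top r s k v hk).symm)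
      have htake : S.take (S.length - 2*r) = S' := by
        rw [h4, List.length_append, tail_length,
          show S'.length + 2*r - 2*r = S'.length from by omega]
        exact List.take_left
      simp only [htake]
      exact setTwo_of r s h1 h2 h3
    have hfrom : ∀ T : {T : List (ℕ × ℕ) // IsCArray T ∧ IsNormal T ∧
        (∀ v, cntA T v = if 1 ≤ v ∧ v ≤ 2 * s then 1 else 0)},
        IsCArray (shiftUp r T.1 ++ sbarArr r k) ∧ IsNormal (shiftUp r T.1 ++ sbarArr r k) ∧
        (∀ v, cntA (shiftUp r T.1 ++ sbarArr r k) v = contentRSR r s k v) := by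
      rintro ⟨T, h1, h2, h3⟩
      exact setOne_of r s k hk h1 h2 h3
    refine Nat.card_congr ⟨fun S => ⟨_, hto S⟩, fun T => ⟨_, hfrom T⟩, ?_, ?_⟩
    · rintro ⟨S, hC, hN, hc⟩
      apply Subtype.ext
      dsimp only
      obtain ⟨S', h1, h2, h3, h4⟩ := core r s r le_rfl S hC hN
        (fun v => (hc v).trans (cnt_top r s k v hk).symm)
      have htake : S.take (S.length - 2*r) = S' := by
        rw [h4, List.length_append, tail_length,
          show S'.length + 2*r - 2*r = S'.length from by omega]
        exact List.take_left
      rw [htake]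
      have hent : ∀ x ∈ S'.map Prod.fst ++ S'.map Prod.snd, r + 1 ≤ x ∧ x ≤ r + 2*s := by
        intro x hx
        have := cntA_mem hx
        rw [h3 x] at this
        split_ifs at this <;> omega
      have hups : shiftUp r (shiftDown r S') = S' := by
        unfold shiftUp shiftDown
        rw [List.map_map]
        conv_rhs => rw [← List.map_id S']
        refine List.map_congr_left ?_
        intro a ha
        have hb1 := (hent a.1 (List.mem_append_left _ (List.mem_map.mpr ⟨a, ha, rfl⟩))).1
        have hb2 := (hent a.2 (List.mem_append_right _ (List.mem_map.mpr ⟨a, ha, rfl⟩))).1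
        simp only [Function.comp_apply, id_eq]
        exact Prod.ext (by dsimp only; omega) (by dsimp only; omega)
      rw [hups, ← sbar_eq_tail r s k hk] at *
      exact h4.symm
    · rintro ⟨T, h1, h2, h3⟩
      apply Subtype.ext
      dsimp only
      have hlen : (shiftUp r T).length = T.length := List.length_map _
      rw [sbar_eq_tail r s k hk, List.length_append, hlen, tail_length,
        show T.length + 2*r - 2*r = T.length from by omega,
        List.take_left' hlen]
      unfold shiftUp shiftDown
      rw [List.map_map]
      conv_rhs => rw [← List.map_id T]
      refine List.map_congr_left ?_
      intro a _
      simp only [Function.comp_apply, id_eq]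
      exact Prod.ext (by simp) (by simp)
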